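/- Let $T$ be a $C_2$ tableau with $A(T)>B(T)+1$, $e_1T\ne0$, and $e_2T\ne0$. Then $e_1e_2T=e_2e_1T\ne0$. -/

import Mathlib

/-! The `C₂` alphabet `1 < 2 < 2̄ < 1̄`, encoded as the integers `1, 2, -2, -1`. -/

/-- Position of a letter of the `C₂` alphabet: `1 ↦ 1`, `2 ↦ 2`, `2̄ ↦ 3`, `1̄ ↦ 4`. -/
def cpos (x : ℤ) : ℤ := if 0 < x then x else 5 + x

/-- A `C₂` tableau on a two-row Young diagram with row lengths `p ≥ q`:
rows weakly increase, columns strictly increase, no column contains both `1` and `1̄`,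
and no configuration with `2` in the top row of a column and `2̄` in the bottom row of
a weakly later column. -/
structure C2Tab (p q : ℕ) where
  hq : q ≤ p
  top : ℕ → ℤ
  bot : ℕ → ℤ
  htop : ∀ i < p, top i = 1 ∨ top i = 2 ∨ top i = -2 ∨ top i = -1
  hbot : ∀ i < q, bot i = 1 ∨ bot i = 2 ∨ bot i = -2 ∨ bot i = -1
  row_top : ∀ i j, i ≤ j → j < p → cpos (top i) ≤ cpos (top j)
  row_bot : ∀ i j, i ≤ j → j < q → cpos (bot i) ≤ cpos (bot j)
  col_strict : ∀ i < q, cpos (top i) < cpos (bot i)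
  no_one_barone : ∀ i < q, ¬ (top i = 1 ∧ bot i = -1)
  no_config : ∀ i j, i ≤ j → j < q → ¬ (top i = 2 ∧ bot j = -2)

/-- The column word of a `C₂` tableau: for each two-row column, bottom then top entry,
left to right, followed by the one-row entries left to right (length `p + q`). -/
def cword {p q : ℕ} (T : C2Tab p q) (m : ℕ) : ℤ :=
  if m < 2 * q then (if m % 2 = 0 then T.bot (m / 2) else T.top (m / 2)) else T.top (m - q)

/-- The `i`-signature of a letter (colors `i : Fin 2`, with `0` for color 1 and `1` for
color 2): for color 1, `2, 1̄ ↦ +` and `1, 2̄ ↦ −`; for color 2, `2̄ ↦ +`, `2 ↦ −`,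
`1, 1̄ ↦ ∗` (recorded as `0`). -/
def csig (i : Fin 2) (x : ℤ) : ℤ :=
  if i = 0 then (if x = 2 ∨ x = -1 then 1 else -1)
  else (if x = -2 then 1 else if x = 2 then -1 else 0)

def plusCount {p q : ℕ} (T : C2Tab p q) (i : Fin 2) (a b : ℕ) : ℕ :=
  ((Finset.Ico a b).filter (fun m => csig i (cword T m) = 1)).card

def minusCount {p q : ℕ} (T : C2Tab p q) (i : Fin 2) (a b : ℕ) : ℕ :=
  ((Finset.Ico a b).filter (fun m => csig i (cword T m) = -1)).card

/-- Position `m` of the column word carries a `+` of the `i`-signature surviving the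
reduction (removal of `+ ∗⋯∗ −` factors). -/
def unmatchedPlus {p q : ℕ} (T : C2Tab p q) (i : Fin 2) (m : ℕ) : Prop :=
  m < p + q ∧ csig i (cword T m) = 1 ∧
  ∀ j, m < j → j < p + q → minusCount T i (m + 1) (j + 1) ≤ plusCount T i (m + 1) (j + 1)

/-- The Kashiwara operator `e_i` acts at position `m`: the leftmost `+` of the reduced
`i`-signature. -/
def actsAt {p q : ℕ} (T : C2Tab p q) (i : Fin 2) (m : ℕ) : Prop :=
  unmatchedPlus T i m ∧ ∀ m' < m, csig i (cword T m') = 1 → ¬ unmatchedPlus T i m'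

/-- The raised value of a letter: `e_1` sends `2 ↦ 1`, `1̄ ↦ 2̄`; `e_2` sends `2̄ ↦ 2`. -/
def raiseLetter (i : Fin 2) (x : ℤ) : ℤ := if i = 0 then (if x = 2 then 1 else -2) else 2

/-- `e_i T = T'` (in particular `e_i T ≠ 0`). -/
def eRel {p q : ℕ} (i : Fin 2) (T T' : C2Tab p q) : Prop :=
  ∃ m, actsAt T i m ∧ cword T' m = raiseLetter i (cword T m) ∧
    ∀ m', m' < p + q → m' ≠ m → cword T' m' = cword T m'

/-- `A(T)` = number of `2̄`'s in the top row. -/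
def Astat {p q : ℕ} (T : C2Tab p q) : ℕ :=
  ((Finset.range p).filter (fun i => T.top i = -2)).card

/-- `B(T)` = number of `2`'s in the top row plus number of `1̄`'s in the bottom row. -/
def Bstat {p q : ℕ} (T : C2Tab p q) : ℕ :=
  ((Finset.range p).filter (fun i => T.top i = 2)).card +
  ((Finset.range q).filter (fun i => T.bot i = -1)).card

/-- `C(T)` = number of `2`'s in the top row. -/
def Cstat {p q : ℕ} (T : C2Tab p q) : ℕ :=
  ((Finset.range p).filter (fun i => T.top i = 2)).card

/-- `D(T)` = number of `2̄`'s in the bottom row. -/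
def Dstat {p q : ℕ} (T : C2Tab p q) : ℕ :=
  ((Finset.range q).filter (fun i => T.bot i = -2)).card


section Basic

/-! ### letter and sign basics -/

lemma csig0_one : csig 0 (1 : ℤ) = -1 := by norm_num [csig]
lemma csig0_two : csig 0 (2 : ℤ) = 1 := by norm_num [csig]
lemma csig0_n2 : csig 0 (-2 : ℤ) = -1 := by norm_num [csig]
lemma csig0_n1 : csig 0 (-1 : ℤ) = 1 := by norm_num [csig]
lemma csig1_one : csig 1 (1 : ℤ) = 0 := by norm_num [csig]
lemma csig1_two : csig 1 (2 : ℤ) = -1 := by norm_num [csig]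
lemma csig1_n2 : csig 1 (-2 : ℤ) = 1 := by norm_num [csig]
lemma csig1_n1 : csig 1 (-1 : ℤ) = 0 := by norm_num [csig]

lemma csig0_eq_one {x : ℤ} (h : csig 0 x = 1) : x = 2 ∨ x = -1 := by
  unfold csig at h; by_cases hc : x = 2 ∨ x = -1
  · exact hc
  · simp [hc] at h

lemma csig1_eq_one {x : ℤ} (h : csig 1 x = 1) : x = -2 := by
  unfold csig at h
  by_cases hc : x = -2
  · exact hc
  · by_cases hc2 : x = 2 <;> simp [hc, hc2] at h

variable {p q : ℕ} (T : C2Tab p q)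

lemma top_ne_neg1_of_lt_q {i : ℕ} (hi : i < q) : T.top i ≠ -1 := by
  intro h
  have h1 := T.col_strict i hi
  have h2 := T.hbot i hi
  rw [h] at h1
  rcases h2 with h2 | h2 | h2 | h2 <;> rw [h2] at h1 <;> norm_num [cpos] at h1

lemma top_neg1_mono {i j : ℕ} (hij : i ≤ j) (hj : j < p) (hi : T.top i = -1) :
    T.top j = -1 := by
  have h1 := T.row_top i j hij hj
  rw [hi] at h1
  have h2 := T.htop j hj
  rcases h2 with h2 | h2 | h2 | h2 <;> rw [h2] at h1 ⊢ <;> norm_num [cpos] at h1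

lemma bot_two_top_one {i : ℕ} (hi : i < q) (hb : T.bot i = 2) : T.top i = 1 := by
  have h1 := T.col_strict i hi
  rw [hb] at h1
  have h2 := T.htop i (lt_of_lt_of_le hi T.hq)
  rcases h2 with h2 | h2 | h2 | h2 <;> rw [h2] at h1 ⊢ <;> norm_num [cpos] at h1

lemma bot_neg1_top {i : ℕ} (hi : i < q) (hb : T.bot i = -1) :
    T.top i = 2 ∨ T.top i = -2 := by
  have h1 := T.col_strict i hi
  rw [hb] at h1
  have h3 := T.no_one_barone i hi
  have h2 := T.htop i (lt_of_lt_of_le hi T.hq)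
  rcases h2 with h2 | h2 | h2 | h2
  · exact absurd ⟨h2, hb⟩ h3
  · exact Or.inl h2
  · exact Or.inr h2
  · rw [h2] at h1; norm_num [cpos] at h1

lemma top_neg2_bot_neg1 {i : ℕ} (hi : i < q) (ht : T.top i = -2) : T.bot i = -1 := by
  have h1 := T.col_strict i hi
  rw [ht] at h1
  have h2 := T.hbot i hi
  rcases h2 with h2 | h2 | h2 | h2 <;> rw [h2] at h1 ⊢ <;> norm_num [cpos] at h1

lemma top_two_lt {i j : ℕ} (hi : T.top i = 2) (hj : T.top j = -2) (hip : i < p) :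
    i < j := by
  by_contra hc
  push_neg at hc
  have h1 := T.row_top j i hc hip
  rw [hi, hj] at h1
  norm_num [cpos] at h1

/-! ### positions -/

def posT (q i : ℕ) : ℕ := if i < q then 2*i+1 else q+i

lemma posT_strictMono {q : ℕ} : StrictMono (posT q) := by
  intro i j hij
  unfold posT
  split_ifs <;> omega

lemma posT_mono {q i j : ℕ} (h : i ≤ j) : posT q i ≤ posT q j :=
  posT_strictMono.monotone h

lemma posT_lt_len {i : ℕ} (hq : q ≤ p) (hi : i < p) : posT q i < p + q := by
  unfold posT; split_ifs <;> omega

lemma cword_bot {i : ℕ} (hi : i < q) : cword T (2*i) = T.bot i := by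
  unfold cword
  rw [if_pos (by omega)]
  simp [Nat.mul_div_cancel_left, Nat.mul_mod_right]

lemma cword_posT {i : ℕ} (hi : i < p) : cword T (posT q i) = T.top i := by
  unfold cword posT
  by_cases h : i < q
  · rw [if_pos h, if_pos (by omega)]
    have h1 : (2*i+1) % 2 = 1 := by omega
    have h2 : (2*i+1) / 2 = i := by omega
    rw [h1, h2]; norm_num
  · rw [if_neg h, if_neg (by omega)]
    congr 1; omega

lemma pos_cases {m : ℕ} (hm : m < p + q) (hq : q ≤ p) :
    (∃ i, i < q ∧ m = 2*i) ∨ (∃ i, i < p ∧ m = posT q i) := by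
  by_cases h1 : m < 2*q
  · by_cases h2 : m % 2 = 0
    · exact Or.inl ⟨m/2, by omega, by omega⟩
    · refine Or.inr ⟨m/2, by omega, ?_⟩
      unfold posT; rw [if_pos (by omega)]; omega
  · refine Or.inr ⟨m - q, by omega, ?_⟩
    unfold posT; rw [if_neg (by omega)]; omega

end Basic

section Counting

variable {p q : ℕ} (T : C2Tab p q)

lemma count_split (P : ℕ → Prop) [DecidablePred P] {a b c : ℕ} (hab : a ≤ b) (hbc : b ≤ c) :
    ((Finset.Ico a b).filter P).card + ((Finset.Ico b c).filter P).card
      = ((Finset.Ico a c).filter P).card := by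
  rw [← Finset.Ico_union_Ico_eq_Ico hab hbc, Finset.filter_union,
    Finset.card_union_of_disjoint]
  exact Finset.disjoint_filter_filter (Finset.Ico_disjoint_Ico_consecutive a b c)

lemma minus_split (i : Fin 2) {a b c : ℕ} (hab : a ≤ b) (hbc : b ≤ c) :
    minusCount T i a b + minusCount T i b c = minusCount T i a c :=
  count_split _ hab hbc

lemma plus_split (i : Fin 2) {a b c : ℕ} (hab : a ≤ b) (hbc : b ≤ c) :
    plusCount T i a b + plusCount T i b c = plusCount T i a c :=
  count_split _ hab hbc

lemma minus_congr (T' : C2Tab p q) (i : Fin 2) {a b : ℕ}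
    (h : ∀ m ∈ Finset.Ico a b, (csig i (cword T m) = -1 ↔ csig i (cword T' m) = -1)) :
    minusCount T i a b = minusCount T' i a b := by
  unfold minusCount
  congr 1
  exact Finset.filter_congr h

lemma plus_congr (T' : C2Tab p q) (i : Fin 2) {a b : ℕ}
    (h : ∀ m ∈ Finset.Ico a b, (csig i (cword T m) = 1 ↔ csig i (cword T' m) = 1)) :
    plusCount T i a b = plusCount T' i a b := by
  unfold plusCount
  congr 1
  exact Finset.filter_congr h

lemma minus_singleton (i : Fin 2) (a : ℕ) (h : csig i (cword T a) = -1) :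
    minusCount T i a (a+1) = 1 := by
  unfold minusCount
  rw [Nat.Ico_succ_singleton, Finset.filter_singleton, if_pos h, Finset.card_singleton]

lemma plus_singleton_zero (i : Fin 2) (a : ℕ) (h : csig i (cword T a) ≠ 1) :
    plusCount T i a (a+1) = 0 := by
  unfold plusCount
  rw [Nat.Ico_succ_singleton, Finset.filter_singleton, if_neg h, Finset.card_empty]

lemma plus_singleton (i : Fin 2) (a : ℕ) (h : csig i (cword T a) = 1) :
    plusCount T i a (a+1) = 1 := by
  unfold plusCount
  rw [Nat.Ico_succ_singleton, Finset.filter_singleton, if_pos h, Finset.card_singleton]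

lemma minus_singleton_zero (i : Fin 2) (a : ℕ) (h : csig i (cword T a) ≠ -1) :
    minusCount T i a (a+1) = 0 := by
  unfold minusCount
  rw [Nat.Ico_succ_singleton, Finset.filter_singleton, if_neg h, Finset.card_empty]

lemma le_minusCount (i : Fin 2) (a b : ℕ) (F : Finset ℕ) (f : ℕ → ℕ)
    (hmem : ∀ j ∈ F, f j ∈ Finset.Ico a b ∧ csig i (cword T (f j)) = -1)
    (hinj : Set.InjOn f F) : F.card ≤ minusCount T i a b := by
  unfold minusCount
  exact Finset.card_le_card_of_injOn f
    (fun j hj => Finset.mem_filter.2 ⟨(hmem j hj).1, (hmem j hj).2⟩) hinj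

lemma plusCount_le (a b : ℕ) (F1 F2 : Finset ℕ)
    (h : ∀ m' ∈ Finset.Ico a b, csig 0 (cword T m') = 1 →
      (∃ j ∈ F1, j < p ∧ m' = posT q j) ∨ (∃ j ∈ F2, j < q ∧ m' = 2*j)) :
    plusCount T 0 a b ≤ F1.card + F2.card := by
  unfold plusCount
  rw [← Finset.card_disjSum]
  apply Finset.card_le_card_of_injOn
    (fun m' => if m' % 2 = 0 ∧ m' < 2*q then Sum.inr (m'/2)
      else Sum.inl (if m' < 2*q then m'/2 else m' - q))
  · intro m' hm'
    simp only [Finset.mem_coe] at hm' ⊢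
    obtain ⟨hIco, hsig⟩ := Finset.mem_filter.1 hm'
    rcases h m' hIco hsig with ⟨j, hj, hjp, rfl⟩ | ⟨j, hj, hjq, rfl⟩
    · unfold posT
      by_cases hc : j < q
      · rw [if_pos hc]
        rw [if_neg (by omega), if_pos (by omega)]
        have : (2*j+1)/2 = j := by omega
        rw [this]
        exact Finset.inl_mem_disjSum.2 hj
      · rw [if_neg hc]
        rw [if_neg (by omega), if_neg (by omega)]
        have : q + j - q = j := by omega
        rw [this]
        exact Finset.inl_mem_disjSum.2 hj
    · rw [if_pos (by constructor <;> omega)]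
      have : (2*j)/2 = j := by omega
      rw [this]
      exact Finset.inr_mem_disjSum.2 hj
  · intro x _ y _ hxy
    dsimp only at hxy
    by_cases hx1 : x % 2 = 0 ∧ x < 2*q <;> by_cases hy1 : y % 2 = 0 ∧ y < 2*q
    · rw [if_pos hx1, if_pos hy1] at hxy
      have := Sum.inr.inj hxy; omega
    · rw [if_pos hx1, if_neg hy1] at hxy
      exact absurd hxy (by simp)
    · rw [if_neg hx1, if_pos hy1] at hxy
      exact absurd hxy (by simp)
    · rw [if_neg hx1, if_neg hy1] at hxy
      have := Sum.inl.inj hxy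
      split_ifs at this <;> omega

end Counting

section MLsec

variable {p q : ℕ}

lemma cword_topl (T : C2Tab p q) {i : ℕ} (hi : i < q) : cword T (2*i+1) = T.top i := by
  have h := cword_posT T (lt_of_lt_of_le hi T.hq)
  unfold posT at h; rwa [if_pos hi] at h

lemma ML (T : C2Tab p q) (hAB : Bstat T ≤ Astat T) {m : ℕ} (hm : m < p + q)
    (hplus : csig 0 (cword T m) = 1)
    (hbad : cword T m = 2 ∨ (m < 2*q ∧ m % 2 = 0)) :
    ¬ unmatchedPlus T 0 m := by
  classical
  intro hun
  have hqp := T.hq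
  unfold Astat Bstat at hAB
  set CF := (Finset.range p).filter (fun j => T.top j = 2) with hCF
  set HF := (Finset.range q).filter (fun j => T.bot j = -1) with hHF
  set AF := (Finset.range p).filter (fun j => T.top j = -2) with hAF
  -- the cutoff k
  obtain ⟨k, hkp, hP3, hP1⟩ :
      ∃ k, k ≤ p ∧ (∀ j, j < p → T.top j ≠ -1 → j < k) ∧
        (∀ j, j < k → j < p → T.top j ≠ -1) := by
    by_cases hSne : ((Finset.range p).filter (fun j => T.top j = -1)).Nonempty
    · refine ⟨((Finset.range p).filter (fun j => T.top j = -1)).min' hSne, ?_, ?_, ?_⟩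
      · have hmem := Finset.min'_mem _ hSne
        simp only [Finset.mem_filter, Finset.mem_range] at hmem
        omega
      · intro j hj hne
        by_contra hc
        push_neg at hc
        have hmem := Finset.min'_mem _ hSne
        simp only [Finset.mem_filter, Finset.mem_range] at hmem
        exact hne (top_neg1_mono T hc hj hmem.2)
      · intro j hjk hjp hj1
        have : ((Finset.range p).filter (fun j => T.top j = -1)).min' hSne ≤ j :=
          Finset.min'_le _ _ (by
            simp only [Finset.mem_filter, Finset.mem_range]; exact ⟨hjp, hj1⟩)
        omega
    · refine ⟨p, le_refl p, fun j hj _ => hj, fun j hjk hjp hj1 => ?_⟩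
      exact hSne ⟨j, by simp only [Finset.mem_filter, Finset.mem_range]; exact ⟨hjp, hj1⟩⟩
  rcases pos_cases hm hqp with ⟨i, hiq, rfl⟩ | ⟨i, hip, rfl⟩
  · -- bottom position
    rw [cword_bot T hiq] at hplus
    rcases csig0_eq_one hplus with hb2 | hbm1
    · -- Case 1 : bot i = 2, witness is the entry just above
      have ht1 : T.top i = 1 := bot_two_top_one T hiq hb2
      have h := hun.2.2 (2*i+1) (by omega) (by omega)
      rw [minus_singleton T 0 (2*i+1) (by rw [cword_topl T hiq, ht1]; exact csig0_one),
        plus_singleton_zero T 0 (2*i+1)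
          (by rw [cword_topl T hiq, ht1, csig0_one]; norm_num)] at h
      omega
    · -- Case 3 : bot i = -1
      have hti := bot_neg1_top T hiq hbm1
      have hip : i < p := lt_of_lt_of_le hiq hqp
      have hik : i < k := hP3 i hip (by rcases hti with h | h <;> rw [h] <;> norm_num)
      have hkp1 : k - 1 < p := by omega
      have hjlt : posT q (k-1) < p + q := posT_lt_len hqp hkp1
      have hposTi : posT q i = 2*i+1 := by unfold posT; rw [if_pos hiq]
      have hmlt : 2*i < posT q (k-1) := by
        have := posT_mono (q := q) (show i ≤ k-1 by omega); omega
      have h := hun.2.2 (posT q (k-1)) hmlt hjlt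
      set G1 := AF.filter (fun j => j < i) with hG1
      set G2 := AF.filter (fun j => ¬ j < i) with hG2
      set E1 := HF.filter (fun j => j < i) with hE1
      set E2 := HF.filter (fun j => ¬ j < i) with hE2
      have hsplitA : G1.card + G2.card = AF.card :=
        Finset.card_filter_add_card_filter_not _
      have hsplitH : E1.card + E2.card = HF.card :=
        Finset.card_filter_add_card_filter_not _
      have hG1E1 : G1.card ≤ E1.card := by
        apply Finset.card_le_card
        intro j hj
        simp only [hG1, hAF, hE1, hHF, Finset.mem_filter, Finset.mem_range] at hj ⊢
        exact ⟨⟨by omega, top_neg2_bot_neg1 T (by omega) hj.1.2⟩, hj.2⟩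
      have hiE2 : i ∈ E2 := by
        simp only [hE2, hHF, Finset.mem_filter, Finset.mem_range]
        exact ⟨⟨hiq, hbm1⟩, by omega⟩
      have hE2pos : 0 < E2.card := Finset.card_pos.2 ⟨i, hiE2⟩
      have hminus : G2.card ≤ minusCount T 0 (2*i + 1) (posT q (k-1) + 1) := by
        apply le_minusCount T 0 _ _ _ (posT q)
        · intro j hj
          simp only [hG2, hAF, Finset.mem_filter, Finset.mem_range] at hj
          obtain ⟨⟨hjp2, hj2⟩, hj3⟩ := hj
          refine ⟨Finset.mem_Ico.2 ⟨?_, ?_⟩, ?_⟩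
          · have := posT_mono (q := q) (show i ≤ j by omega); omega
          · have hjk : j < k := hP3 j hjp2 (by rw [hj2]; norm_num)
            have := posT_mono (q := q) (show j ≤ k-1 by omega); omega
          · rw [cword_posT T hjp2, hj2]; exact csig0_n2
        · exact fun x _ y _ hxy => posT_strictMono.injective hxy
      have hplusb : plusCount T 0 (2*i + 1) (posT q (k-1) + 1)
          ≤ CF.card + (E2.erase i).card := by
        apply plusCount_le
        intro m' hm' hsig
        rw [Finset.mem_Ico] at hm'
        have hm'lt : m' < p + q := by omega
        rcases pos_cases hm'lt hqp with ⟨j, hjq, rfl⟩ | ⟨j, hjp2, rfl⟩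
        · rw [cword_bot T hjq] at hsig
          have hij : i < j := by omega
          rcases csig0_eq_one hsig with hb2' | hbm1'
          · exfalso
            have htj : T.top j = 1 := bot_two_top_one T hjq hb2'
            have hr := T.row_top i j (le_of_lt hij) (by omega)
            rcases hti with h' | h' <;> rw [h', htj] at hr <;> norm_num [cpos] at hr
          · refine Or.inr ⟨j, ?_, hjq, rfl⟩
            rw [Finset.mem_erase]
            constructor
            · omega
            · simp only [hE2, hHF, Finset.mem_filter, Finset.mem_range]
              exact ⟨⟨hjq, hbm1'⟩, by omega⟩
        · rw [cword_posT T hjp2] at hsig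
          rcases csig0_eq_one hsig with ht2' | htm1'
          · refine Or.inl ⟨j, ?_, hjp2, rfl⟩
            simp only [hCF, Finset.mem_filter, Finset.mem_range]
            exact ⟨hjp2, ht2'⟩
          · exfalso
            have hjk : j < k := by
              by_contra hc
              have := posT_strictMono (q := q) (show k-1 < j by omega)
              omega
            exact hP1 j hjk hjp2 htm1'
      have hcer : (E2.erase i).card = E2.card - 1 := Finset.card_erase_of_mem hiE2
      omega
  · -- top position
    rw [cword_posT T hip] at hplus hbad
    rcases csig0_eq_one hplus with ht2 | htm1
    · -- Case 2 : top i = 2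
      have hik : i < k := hP3 i hip (by rw [ht2]; norm_num)
      have hiCF : i ∈ CF := by
        simp only [hCF, Finset.mem_filter, Finset.mem_range]; exact ⟨hip, ht2⟩
      have hCpos : 0 < CF.card := Finset.card_pos.2 ⟨i, hiCF⟩
      have hApos : 0 < AF.card := by omega
      obtain ⟨i2, hi2⟩ := Finset.card_pos.1 hApos
      simp only [hAF, Finset.mem_filter, Finset.mem_range] at hi2
      have hii2 : i < i2 := top_two_lt T ht2 hi2.2 hip
      have hi2k : i2 < k := hP3 i2 hi2.1 (by rw [hi2.2]; norm_num)
      have hkp1 : k - 1 < p := by omega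
      have hjlt : posT q (k-1) < p + q := posT_lt_len hqp hkp1
      have hmlt : posT q i < posT q (k-1) := posT_strictMono (by omega)
      have h := hun.2.2 (posT q (k-1)) hmlt hjlt
      have hminus : AF.card ≤ minusCount T 0 (posT q i + 1) (posT q (k-1) + 1) := by
        apply le_minusCount T 0 _ _ _ (posT q)
        · intro j hj
          simp only [hAF, Finset.mem_filter, Finset.mem_range] at hj
          obtain ⟨hjp2, hj2⟩ := hj
          refine ⟨Finset.mem_Ico.2 ⟨?_, ?_⟩, ?_⟩
          · have := posT_strictMono (q := q) (top_two_lt T ht2 hj2 hip); omega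
          · have hjk : j < k := hP3 j hjp2 (by rw [hj2]; norm_num)
            have := posT_mono (q := q) (show j ≤ k-1 by omega); omega
          · rw [cword_posT T hjp2, hj2]; exact csig0_n2
        · exact fun x _ y _ hxy => posT_strictMono.injective hxy
      have hplusb : plusCount T 0 (posT q i + 1) (posT q (k-1) + 1)
          ≤ (CF.erase i).card + HF.card := by
        apply plusCount_le
        intro m' hm' hsig
        rw [Finset.mem_Ico] at hm'
        have hm'lt : m' < p + q := by omega
        rcases pos_cases hm'lt hqp with ⟨j, hjq, rfl⟩ | ⟨j, hjp2, rfl⟩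
        · rw [cword_bot T hjq] at hsig
          rcases csig0_eq_one hsig with hb2' | hbm1'
          · exfalso
            have htj : T.top j = 1 := bot_two_top_one T hjq hb2'
            have hiq' : i < q := by
              by_contra hc
              have : posT q i = q + i := by unfold posT; rw [if_neg hc]
              omega
            have hij : i < j := by
              have : posT q i = 2*i+1 := by unfold posT; rw [if_pos hiq']
              omega
            have hr := T.row_top i j (le_of_lt hij) (by omega)
            rw [ht2, htj] at hr; norm_num [cpos] at hr
          · refine Or.inr ⟨j, ?_, hjq, rfl⟩
            simp only [hHF, Finset.mem_filter, Finset.mem_range]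
            exact ⟨hjq, hbm1'⟩
        · rw [cword_posT T hjp2] at hsig
          rcases csig0_eq_one hsig with ht2' | htm1'
          · refine Or.inl ⟨j, ?_, hjp2, rfl⟩
            rw [Finset.mem_erase]
            refine ⟨?_, ?_⟩
            · intro hji
              subst hji
              omega
            · simp only [hCF, Finset.mem_filter, Finset.mem_range]
              exact ⟨hjp2, ht2'⟩
          · exfalso
            have hjk : j < k := by
              by_contra hc
              have := posT_strictMono (q := q) (show k-1 < j by omega)
              omega
            exact hP1 j hjk hjp2 htm1'
      have hcer : (CF.erase i).card = CF.card - 1 := Finset.card_erase_of_mem hiCF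
      omega
    · -- letter -1 in top row : excluded by hbad
      exfalso
      rcases hbad with h2 | ⟨hlt2q, hmod⟩
      · rw [htm1] at h2; norm_num at h2
      · unfold posT at hlt2q hmod
        split_ifs at hlt2q hmod with hc <;> omega

end MLsec

section Tools

variable {p q : ℕ}

/-- local witness lemma -/
lemma LW (T : C2Tab p q) (i : Fin 2) {m2 m' : ℕ} (h2 : unmatchedPlus T i m2)
    (hlt : m' < m2) (hpl : csig i (cword T m') = 1) (hnot : ¬ unmatchedPlus T i m') :
    ∃ j, m' < j ∧ j < m2 ∧
      plusCount T i (m'+1) (j+1) < minusCount T i (m'+1) (j+1) := by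
  obtain ⟨hm2len, hsig2, hall2⟩ := h2
  have hm'len : m' < p + q := by omega
  unfold unmatchedPlus at hnot
  push_neg at hnot
  obtain ⟨j0, hj0a, hj0b, hj0c⟩ := hnot hm'len hpl
  by_cases hcmp : j0 < m2
  · exact ⟨j0, hj0a, hcmp, hj0c⟩
  · -- j0 ≥ m2 : shrink the witness to m2 - 1
    have hm2j0 : m2 ≤ j0 := by omega
    have e1 : minusCount T i (m'+1) m2 + minusCount T i m2 (m2+1)
        = minusCount T i (m'+1) (m2+1) := minus_split T i (by omega) (by omega)
    have e2 : plusCount T i (m'+1) m2 + plusCount T i m2 (m2+1)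
        = plusCount T i (m'+1) (m2+1) := plus_split T i (by omega) (by omega)
    have e3 : minusCount T i (m'+1) (m2+1) + minusCount T i (m2+1) (j0+1)
        = minusCount T i (m'+1) (j0+1) := minus_split T i (by omega) (by omega)
    have e4 : plusCount T i (m'+1) (m2+1) + plusCount T i (m2+1) (j0+1)
        = plusCount T i (m'+1) (j0+1) := plus_split T i (by omega) (by omega)
    have e5 : minusCount T i m2 (m2+1) = 0 :=
      minus_singleton_zero T i m2 (by rw [hsig2]; norm_num)
    have e6 : plusCount T i m2 (m2+1) = 1 := plus_singleton T i m2 hsig2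
    have e7 : minusCount T i (m2+1) (j0+1) ≤ plusCount T i (m2+1) (j0+1) := by
      by_cases hj0m2 : m2 < j0
      · exact hall2 j0 hj0m2 hj0b
      · have : j0 = m2 := by omega
        subst this
        unfold minusCount plusCount
        simp
    have key : plusCount T i (m'+1) m2 < minusCount T i (m'+1) m2 := by omega
    have hne : m' + 1 < m2 := by
      by_contra hc
      have : minusCount T i (m'+1) m2 = 0 := by
        unfold minusCount
        rw [Finset.Ico_eq_empty (by omega), Finset.filter_empty, Finset.card_empty]
      omega
    refine ⟨m2 - 1, by omega, by omega, ?_⟩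
    have hrw : m2 - 1 + 1 = m2 := by omega
    rw [hrw]
    exact key

lemma actsAt_unique (T : C2Tab p q) (i : Fin 2) {m m' : ℕ} (h : actsAt T i m)
    (h' : actsAt T i m') : m = m' := by
  by_contra hne
  rcases lt_or_gt_of_ne hne with hlt | hlt
  · exact h'.2 m hlt h.1.2.1 h.1
  · exact h.2 m' hlt h'.1.2.1 h'.1

lemma top_neg1_ge_q (T : C2Tab p q) {k : ℕ} (hk1 : T.top k = -1) : q ≤ k := by
  by_contra hc
  exact top_ne_neg1_of_lt_q T (by omega) hk1

lemma cword_toph (T : C2Tab p q) {k : ℕ} (hkq : q ≤ k) (hkp : k < p) :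
    cword T (q + k) = T.top k := by
  unfold cword
  rw [if_neg (by omega)]
  congr 1
  omega

lemma unmatched_top1 (T : C2Tab p q) {k : ℕ} (hkp : k < p) (hk1 : T.top k = -1) :
    unmatchedPlus T 0 (q + k) := by
  have hkq : q ≤ k := top_neg1_ge_q T hk1
  refine ⟨by omega, by rw [cword_toph T hkq hkp, hk1]; exact csig0_n1, ?_⟩
  intro j hj hjlen
  have : minusCount T 0 (q + k + 1) (j + 1) = 0 := by
    unfold minusCount
    rw [Finset.card_eq_zero, Finset.filter_eq_empty_iff]
    intro m' hm'
    rw [Finset.mem_Ico] at hm'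
    have hm'q : ¬ m' < 2 * q := by omega
    have hm'top : T.top (m' - q) = -1 :=
      top_neg1_mono T (show k ≤ m' - q by omega) (by omega) hk1
    unfold cword
    rw [if_neg hm'q, hm'top, csig0_n1]
    norm_num
  omega

/-- Under `A ≥ B`, `e₁` acts exactly at the first `1̄` of the top row. -/
lemma ACT (T : C2Tab p q) (hAB : Bstat T ≤ Astat T) {k : ℕ} (hkp : k < p)
    (hk1 : T.top k = -1) (hmin : ∀ j, j < k → j < p → T.top j ≠ -1) :
    actsAt T 0 (q + k) := by
  have hkq : q ≤ k := top_neg1_ge_q T hk1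
  refine ⟨unmatched_top1 T hkp hk1, ?_⟩
  intro m' hm' hpl hun
  have hm'len : m' < p + q := by omega
  rcases pos_cases hm'len T.hq with ⟨j, hjq, rfl⟩ | ⟨j, hjp, rfl⟩
  · exact ML T hAB hm'len hpl (Or.inr ⟨by omega, by omega⟩) hun
  · rw [cword_posT T hjp] at hpl
    rcases csig0_eq_one hpl with ht2 | htm1
    · exact ML T hAB hm'len (by rw [cword_posT T hjp]; exact hpl)
        (Or.inl (by rw [cword_posT T hjp, ht2])) hun
    · -- top j = -1 with posT q j < q + k : impossible
      have hjk : k ≤ j := by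
        by_contra hc
        exact hmin j (by omega) hjp htm1
      have : posT q k ≤ posT q j := posT_mono hjk
      have hpk : posT q k = q + k := by unfold posT; rw [if_neg (by omega)]
      omega

/-- Build the tableau obtained by replacing the first `1̄` of the top row by `2̄`. -/
lemma build_e1 (S : C2Tab p q) {k : ℕ} (hkp : k < p) (hk1 : S.top k = -1)
    (hmin : ∀ j, j < k → j < p → S.top j ≠ -1) :
    ∃ W : C2Tab p q, cword W (q + k) = -2 ∧
      ∀ m', m' ≠ q + k → cword W m' = cword S m' := by
  have hkq : q ≤ k := top_neg1_ge_q S hk1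
  refine ⟨⟨S.hq, fun j => if j = k then -2 else S.top j, S.bot, ?_, S.hbot, ?_, S.row_bot,
    ?_, ?_, ?_⟩, ?_, ?_⟩
  · intro i hi
    by_cases hik : i = k
    · rw [if_pos hik]; norm_num
    · rw [if_neg hik]; exact S.htop i hi
  · -- row_top
    intro i j hij hjp
    by_cases hik : i = k <;> by_cases hjk : j = k
    · rw [if_pos hik, if_pos hjk]
    · rw [if_pos hik, if_neg hjk]
      subst hik
      have : S.top j = -1 := top_neg1_mono S (by omega) hjp hk1
      rw [this]; norm_num [cpos]
    · rw [if_neg hik, if_pos hjk]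
      subst hjk
      have hne : S.top i ≠ -1 := hmin i (by omega) (by omega)
      have h4 := S.htop i (by omega)
      rcases h4 with h|h|h|h <;> rw [h] <;> first
        | (exfalso; exact hne h)
        | norm_num [cpos]
    · rw [if_neg hik, if_neg hjk]; exact S.row_top i j hij hjp
  · -- col_strict
    intro i hi
    rw [if_neg (by omega)]
    exact S.col_strict i hi
  · -- no_one_barone
    intro i hi
    rw [if_neg (by omega)]
    exact S.no_one_barone i hi
  · -- no_config
    intro i j hij hjq
    by_cases hik : i = k
    · rw [if_pos hik]
      intro hcon
      norm_num at hcon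
    · rw [if_neg hik]
      exact S.no_config i j hij hjq
  · -- word value at q + k
    unfold cword
    rw [if_neg (by omega)]
    dsimp only
    rw [if_pos (by omega)]
  · -- other word values
    intro m' hm'
    unfold cword
    dsimp only
    by_cases h2q : m' < 2 * q
    · rw [if_pos h2q, if_pos h2q]
      by_cases hmod : m' % 2 = 0
      · rw [if_pos hmod, if_pos hmod]
      · rw [if_neg hmod, if_neg hmod, if_neg (by omega)]
    · rw [if_neg h2q, if_neg h2q, if_neg (by omega)]
end Tools

section MainAux

variable {p q : ℕ}

lemma posT_ne_double {c j : ℕ} (hj : j < q) : posT q c ≠ 2*j := by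
  unfold posT; split_ifs <;> omega

lemma raise1_eq (x : ℤ) : raiseLetter 1 x = 2 := by
  have : (1 : Fin 2) ≠ 0 := by decide
  simp [raiseLetter, this]

lemma raise0_n1 : raiseLetter 0 (-1 : ℤ) = -2 := by norm_num [raiseLetter]

end MainAux

/-- If `T` is a `C₂` tableau with `A(T) > B(T) + 1`, `e₁T ≠ 0` and
`e₂T ≠ 0`, then `e₁e₂T = e₂e₁T ≠ 0`. -/
theorem degree_two_relation_AgtB (p q : ℕ) (T : C2Tab p q)
    (hAB : Bstat T + 1 < Astat T)
    (h1 : ∃ U, eRel 0 T U) (h2 : ∃ U, eRel 1 T U) :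
    ∃ (U V W W' : C2Tab p q),
      eRel 1 T U ∧ eRel 0 U W ∧ eRel 0 T V ∧ eRel 1 V W' ∧
      ∀ m < p + q, cword W m = cword W' m := by
  classical
  obtain ⟨V, m1v, hact1, hV1, hV2⟩ := h1
  obtain ⟨U, m2, hact2, hU1, hU2⟩ := h2
  have hqp := T.hq
  have hAB0 : Bstat T ≤ Astat T := by omega
  have hm2len : m2 < p + q := hact2.1.1
  have hm2w : cword T m2 = -2 := csig1_eq_one hact2.1.2.1
  have hm1len : m1v < p + q := hact1.1.1
  -- the letter at the acting position of e1 is a 1-bar in the top row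
  have hm1top : ∃ i, i < p ∧ m1v = posT q i ∧ T.top i = -1 := by
    rcases pos_cases hm1len hqp with ⟨i, hiq, rfl⟩ | ⟨i, hip, rfl⟩
    · exact absurd hact1.1
        (ML T hAB0 hm1len hact1.1.2.1 (Or.inr ⟨by omega, by omega⟩))
    · refine ⟨i, hip, rfl, ?_⟩
      have hpl := hact1.1.2.1
      rw [cword_posT T hip] at hpl
      rcases csig0_eq_one hpl with ht2 | htm1
      · exact absurd hact1.1 (ML T hAB0 hm1len hact1.1.2.1
          (Or.inl (by rw [cword_posT T hip, ht2])))
      · exact htm1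
  obtain ⟨i1, hi1p, hm1eq, hi1top⟩ := hm1top
  -- k = first 1-bar column of the top row
  have hSne : ((Finset.range p).filter (fun j => T.top j = -1)).Nonempty :=
    ⟨i1, by simp only [Finset.mem_filter, Finset.mem_range]; exact ⟨hi1p, hi1top⟩⟩
  obtain ⟨k, hkk, hkmin⟩ : ∃ k, (k < p ∧ T.top k = -1) ∧
      (∀ j, j < k → j < p → T.top j ≠ -1) := by
    refine ⟨((Finset.range p).filter (fun j => T.top j = -1)).min' hSne, ?_, ?_⟩
    · have hmem := Finset.min'_mem _ hSne
      simp only [Finset.mem_filter, Finset.mem_range] at hmem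
      exact hmem
    · intro j hjk hjp hj1
      have : ((Finset.range p).filter (fun j => T.top j = -1)).min' hSne ≤ j :=
        Finset.min'_le _ _ (by
          simp only [Finset.mem_filter, Finset.mem_range]; exact ⟨hjp, hj1⟩)
      omega
  obtain ⟨hkp, hk1⟩ := hkk
  have hkq : q ≤ k := top_neg1_ge_q T hk1
  have hactTk : actsAt T 0 (q + k) := ACT T hAB0 hkp hk1 hkmin
  have hm1v : m1v = q + k := actsAt_unique T 0 hact1 hactTk
  have hposTk : posT q k = q + k := by unfold posT; rw [if_neg (by omega)]
  -- m2 is strictly left of q + k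
  have hm2lt : m2 < q + k := by
    rcases pos_cases hm2len hqp with ⟨j, hjq, rfl⟩ | ⟨j, hjp, rfl⟩
    · omega
    · rw [cword_posT T hjp] at hm2w
      have hjk : j < k := by
        by_contra hc
        have := top_neg1_mono T (show k ≤ j by omega) hjp hk1
        rw [this] at hm2w; norm_num at hm2w
      have := posT_strictMono (q := q) hjk
      omega
  -- U's entries in terms of T's
  have hUword2 : cword U m2 = 2 := by rw [hU1, hm2w, raise1_eq]
  have hUtop : ∀ j, j < p → posT q j ≠ m2 → U.top j = T.top j := by
    intro j hj hne
    have h := hU2 (posT q j) (posT_lt_len hqp hj) hne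
    rwa [cword_posT U hj, cword_posT T hj] at h
  have hUbot : ∀ j, j < q → 2*j ≠ m2 → U.bot j = T.bot j := by
    intro j hj hne
    have h := hU2 (2*j) (by omega) hne
    rwa [cword_bot U hj, cword_bot T hj] at h
  -- A(U) ≥ B(U)
  have hUA : Bstat U ≤ Astat U := by
    unfold Astat Bstat at hAB ⊢
    rcases pos_cases hm2len hqp with ⟨c2, hc2q, hm2f⟩ | ⟨c2, hc2p, hm2f⟩
    · -- m2 is a bottom entry: all stats are unchanged
      have htopeq : ∀ j, j < p → U.top j = T.top j := by
        intro j hj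
        exact hUtop j hj (by rw [hm2f]; exact posT_ne_double hc2q)
      have hA : (Finset.range p).filter (fun j => U.top j = -2)
          = (Finset.range p).filter (fun j => T.top j = -2) := by
        apply Finset.filter_congr
        intro j hj
        rw [htopeq j (Finset.mem_range.1 hj)]
      have hC : (Finset.range p).filter (fun j => U.top j = 2)
          = (Finset.range p).filter (fun j => T.top j = 2) := by
        apply Finset.filter_congr
        intro j hj
        rw [htopeq j (Finset.mem_range.1 hj)]
      have hTc2 : T.bot c2 = -2 := by
        rw [← cword_bot T hc2q, ← hm2f]; exact hm2w
      have hUc2 : U.bot c2 = 2 := by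
        rw [← cword_bot U hc2q, ← hm2f]; exact hUword2
      have hH : (Finset.range q).filter (fun j => U.bot j = -1)
          = (Finset.range q).filter (fun j => T.bot j = -1) := by
        ext j
        simp only [Finset.mem_filter, Finset.mem_range]
        by_cases hjc : j = c2
        · subst hjc
          rw [hUc2, hTc2]
          constructor <;> rintro ⟨h, h'⟩ <;> norm_num at h'
        · constructor
          · rintro ⟨h, h'⟩
            rw [hUbot j h (by rw [hm2f]; omega)] at h'
            exact ⟨h, h'⟩
          · rintro ⟨h, h'⟩
            refine ⟨h, ?_⟩
            rw [hUbot j h (by rw [hm2f]; omega)]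
            exact h'
      rw [hA, hC, hH]
      omega
    · -- m2 is a top entry at column c2
      have hTc2 : T.top c2 = -2 := by
        rw [← cword_posT T hc2p, ← hm2f]; exact hm2w
      have hUc2 : U.top c2 = 2 := by
        rw [← cword_posT U hc2p, ← hm2f]; exact hUword2
      have htopeq : ∀ j, j < p → j ≠ c2 → U.top j = T.top j := by
        intro j hj hne
        refine hUtop j hj ?_
        rw [hm2f]
        intro hc
        exact hne (posT_strictMono.injective hc)
      have hboteq : ∀ j, j < q → U.bot j = T.bot j := by
        intro j hj
        refine hUbot j hj ?_
        rw [hm2f]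
        intro hc
        exact posT_ne_double hj hc.symm
      have hA : (Finset.range p).filter (fun j => U.top j = -2)
          = ((Finset.range p).filter (fun j => T.top j = -2)).erase c2 := by
        ext j
        simp only [Finset.mem_filter, Finset.mem_range, Finset.mem_erase]
        constructor
        · rintro ⟨hjp, hj2⟩
          have hne : j ≠ c2 := by
            intro h; subst h; rw [hUc2] at hj2; norm_num at hj2
          rw [htopeq j hjp hne] at hj2
          exact ⟨hne, hjp, hj2⟩
        · rintro ⟨hne, hjp, hj2⟩
          rw [← htopeq j hjp hne] at hj2
          exact ⟨hjp, hj2⟩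
      have hC : (Finset.range p).filter (fun j => U.top j = 2)
          = insert c2 ((Finset.range p).filter (fun j => T.top j = 2)) := by
        ext j
        simp only [Finset.mem_filter, Finset.mem_range, Finset.mem_insert]
        constructor
        · rintro ⟨hjp, hj2⟩
          by_cases hne : j = c2
          · exact Or.inl hne
          · rw [htopeq j hjp hne] at hj2
            exact Or.inr ⟨hjp, hj2⟩
        · rintro (hne | ⟨hjp, hj2⟩)
          · subst hne; exact ⟨hc2p, hUc2⟩
          · by_cases hne : j = c2
            · subst hne; rw [hTc2] at hj2; norm_num at hj2
            · rw [← htopeq j hjp hne] at hj2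
              exact ⟨hjp, hj2⟩
      have hH : (Finset.range q).filter (fun j => U.bot j = -1)
          = (Finset.range q).filter (fun j => T.bot j = -1) := by
        apply Finset.filter_congr
        intro j hj
        rw [hboteq j (Finset.mem_range.1 hj)]
      have hmemA : c2 ∈ (Finset.range p).filter (fun j => T.top j = -2) := by
        simp only [Finset.mem_filter, Finset.mem_range]; exact ⟨hc2p, hTc2⟩
      have hnotC : c2 ∉ (Finset.range p).filter (fun j => T.top j = 2) := by
        simp only [Finset.mem_filter, Finset.mem_range]
        rintro ⟨-, h⟩; rw [hTc2] at h; norm_num at h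
      rw [hA, hC, hH, Finset.card_erase_of_mem hmemA, Finset.card_insert_of_notMem hnotC]
      have hApos : 0 < ((Finset.range p).filter (fun j => T.top j = -2)).card :=
        Finset.card_pos.2 ⟨c2, hmemA⟩
      omega
  -- k is also the first 1-bar column of U's top row
  have hUk1 : U.top k = -1 := by
    rw [hUtop k hkp (by rw [hposTk]; omega)]; exact hk1
  have hUkmin : ∀ j, j < k → j < p → U.top j ≠ -1 := by
    intro j hjk hjp
    by_cases hne : posT q j = m2
    · have : U.top j = 2 := by
        rw [← cword_posT U hjp, hne]; exact hUword2
      rw [this]; norm_num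
    · rw [hUtop j hjp hne]; exact hkmin j hjk hjp
  have hactUk : actsAt U 0 (q + k) := ACT U hUA hkp hUk1 hUkmin
  -- construct W
  obtain ⟨W, hWk, hWother⟩ := build_e1 U hkp hUk1 hUkmin
  have hUwk : cword U (q + k) = -1 := by rw [cword_toph U hkq hkp]; exact hUk1
  have heUW : eRel 0 U W := by
    refine ⟨q + k, hactUk, ?_, fun m' _ hne => hWother m' hne⟩
    rw [hWk, hUwk, raise0_n1]
  -- V's word
  have hVk : cword V (q + k) = -2 := by
    rw [hm1v] at hV1
    rw [hV1, cword_toph T hkq hkp, hk1, raise0_n1]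
  have hVother : ∀ m', m' < p + q → m' ≠ q + k → cword V m' = cword T m' := by
    rw [hm1v] at hV2; exact hV2
  -- e2 still acts at m2 on V
  obtain ⟨⟨_, hsig2, hall2⟩, hleft2⟩ := hact2
  have hVm2 : cword V m2 = cword T m2 := hVother m2 hm2len (by omega)
  have hactV : actsAt V 1 m2 := by
    refine ⟨⟨hm2len, by rw [hVm2]; exact hsig2, ?_⟩, ?_⟩
    · intro j hj hjlen
      have hminus_eq : minusCount V 1 (m2+1) (j+1) = minusCount T 1 (m2+1) (j+1) := by
        apply minus_congr
        intro m'' hm''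
        rw [Finset.mem_Ico] at hm''
        by_cases hqk : m'' = q + k
        · subst hqk
          rw [hVk, cword_toph T hkq hkp, hk1, csig1_n2, csig1_n1]
          norm_num
        · rw [hVother m'' (by omega) hqk]
      have hplus_le : plusCount T 1 (m2+1) (j+1) ≤ plusCount V 1 (m2+1) (j+1) := by
        unfold plusCount
        apply Finset.card_le_card
        intro m'' hm''
        rw [Finset.mem_filter] at hm'' ⊢
        obtain ⟨hmem, hval⟩ := hm''
        refine ⟨hmem, ?_⟩
        by_cases hqk : m'' = q + k
        · subst hqk
          rw [cword_toph T hkq hkp, hk1, csig1_n1] at hval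
          norm_num at hval
        · rw [Finset.mem_Ico] at hmem
          rw [hVother m'' (by omega) hqk]
          exact hval
      rw [hminus_eq]
      exact le_trans (hall2 j hj hjlen) hplus_le
    · intro m' hm' hplV hunV
      have hVm' : cword V m' = cword T m' := hVother m' (by omega) (by omega)
      rw [hVm'] at hplV
      have hnotT : ¬ unmatchedPlus T 1 m' := hleft2 m' hm' hplV
      obtain ⟨j, hja, hjb, hjc⟩ := LW T 1 ⟨hm2len, hsig2, hall2⟩ hm' hplV hnotT
      have hweq : ∀ m'' ∈ Finset.Ico (m'+1) (j+1), cword V m'' = cword T m'' := by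
        intro m'' hm''
        rw [Finset.mem_Ico] at hm''
        exact hVother m'' (by omega) (by omega)
      have hmeq : minusCount V 1 (m'+1) (j+1) = minusCount T 1 (m'+1) (j+1) :=
        minus_congr V T 1 (fun m'' hm'' => by rw [hweq m'' hm''])
      have hpeq : plusCount V 1 (m'+1) (j+1) = plusCount T 1 (m'+1) (j+1) :=
        plus_congr V T 1 (fun m'' hm'' => by rw [hweq m'' hm''])
      have := hunV.2.2 j hja (by omega)
      rw [hmeq, hpeq] at this
      omega
  have heVW : eRel 1 V W := by
    refine ⟨m2, hactV, ?_, ?_⟩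
    · rw [hWother m2 (by omega), hUword2, raise1_eq]
    · intro m' hm'len hne
      by_cases hqk : m' = q + k
      · subst hqk
        rw [hWk, hVk]
      · rw [hWother m' hqk, hU2 m' hm'len hne, ← hVother m' hm'len hqk]
  exact ⟨U, V, W, W, ⟨m2, ⟨⟨hm2len, hsig2, hall2⟩, hleft2⟩, hU1, hU2⟩, heUW,
    ⟨m1v, hact1, hV1, hV2⟩, heVW, fun m _ => rfl⟩
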